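/- arXiv:2006.09626 — 3 statements merged into one kernel-verified Lean document; each statement's English description precedes it below -/
import Mathlib

section
/- Let J be the 2k×2k integer matrix [[H_k, 2E],[2E − H_k, −2E]], where H_k is the k×k matrix with (l,j) entry 2 for l ≤ j and 0 otherwise, and E the identity. Let J' be the (2k−1)×(2k−1) matrix obtained from J by deleting its 2k-th row and 2k-th column. Then det J' = (−1)^{k−1} · 2^{2k−1}. -/
/-- `H_k` is the `k × k` integer matrix with `(l,j)` entry `2` if `l ≤ j` and `0` otherwise. -/
def Hmat (k : ℕ) : Matrix (Fin k) (Fin k) ℤ :=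
  Matrix.of fun l j => if l ≤ j then 2 else 0

/-- The block matrix `J = [[H_k, 2E], [2E - H_k, -2E]]`, reindexed by `Fin (k + k)`. -/
def Jmat (k : ℕ) : Matrix (Fin (k + k)) (Fin (k + k)) ℤ :=
  (Matrix.fromBlocks (Hmat k) (2 : Matrix (Fin k) (Fin k) ℤ)
      ((2 : Matrix (Fin k) (Fin k) ℤ) - Hmat k)
      (-(2 : Matrix (Fin k) (Fin k) ℤ))).submatrix
    finSumFinEquiv.symm finSumFinEquiv.symm

lemma two_mat_apply {n : ℕ} (i j : Fin n) :
    (2 : Matrix (Fin n) (Fin n) ℤ) i j = if i = j then 2 else 0 := by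
  have : (2 : Matrix (Fin n) (Fin n) ℤ) = (1 : Matrix (Fin n) (Fin n) ℤ) + 1 := by norm_num
  rw [this]
  simp only [Matrix.add_apply, Matrix.one_apply]
  split <;> ring

lemma finSumFinEquiv_symm_eq (k : ℕ) (i : Fin (k + k)) :
    finSumFinEquiv.symm i =
      if h : i.val < k then Sum.inl ⟨i.val, h⟩ else Sum.inr ⟨i.val - k, by omega⟩ := by
  rw [Equiv.symm_apply_eq]
  split_ifs with h
  · exact Fin.ext (by simp)
  · exact Fin.ext (by simp; omega)

/-- Explicit entry formula for `Jmat` in terms of natural number indices. -/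
lemma Jmat_apply (k : ℕ) (i j : Fin (k + k)) :
    Jmat k i j =
      if i.val < k then
        (if j.val < k then (if i.val ≤ j.val then 2 else 0)
         else (if j.val = i.val + k then 2 else 0))
      else
        (if j.val < k then
            ((if i.val - k = j.val then 2 else 0) - (if i.val - k ≤ j.val then 2 else 0))
         else (if i.val = j.val then -2 else 0)) := by
  simp only [Jmat, Matrix.submatrix_apply, finSumFinEquiv_symm_eq]
  by_cases hi : i.val < k <;> by_cases hj : j.val < k <;>
    simp [hi, hj, Hmat, Matrix.fromBlocks, two_mat_apply, Fin.ext_iff, Matrix.sub_apply,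
      Matrix.neg_apply] <;> omega

/-- Entry function of `Jmat` as a function of natural numbers. -/
def fJ (k a b : ℕ) : ℤ :=
  if a < k then
    (if b < k then (if a ≤ b then 2 else 0)
     else (if b = a + k then 2 else 0))
  else
    (if b < k then
        ((if a - k = b then 2 else 0) - (if a - k ≤ b then 2 else 0))
     else (if a = b then -2 else 0))

lemma Jmat_apply' (k : ℕ) (i j : Fin (k + k)) : Jmat k i j = fJ k i.val j.val :=
  Jmat_apply k i j

/-- Row-operation matrix: adds row `i+k` to row `i`. -/
def Lmat (k : ℕ) : Matrix (Fin (2*k-1)) (Fin (2*k-1)) ℤ :=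
  Matrix.of fun i j => (if i = j then 1 else 0) + (if j.val = i.val + k then 1 else 0)

lemma Lmat_det (k : ℕ) (hk : 1 ≤ k) : (Lmat k).det = 1 := by
  have h : (Lmat k).BlockTriangular id := by
    intro i j hij
    simp only [id] at hij
    simp only [Lmat, Matrix.of_apply]
    have h1 : ¬ (i = j) := by exact fun h => absurd (h ▸ hij) (lt_irrefl _)
    have h2 : ¬ (j.val = i.val + k) := by
      have h4 : (j : ℕ) < (i : ℕ) := hij
      omega
    simp [h1, h2]
  rw [Matrix.det_of_upperTriangular h]
  apply Finset.prod_eq_one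
  intro i _
  simp only [Lmat, Matrix.of_apply]
  have h3 : ¬ (i.val = i.val + k) := by omega
  rw [if_neg h3, add_zero]; simp

lemma key_offdiag (k a b : ℕ) (hk : 1 ≤ k) (ha : a < 2*k-1) (hb : b < 2*k-1) (hab : a < b) :
    fJ k a b + (if a + k < 2*k-1 then fJ k (a+k) b else 0) = 0 := by
  unfold fJ
  split_ifs <;> omega

lemma key_diag (k a : ℕ) (hk : 1 ≤ k) (ha : a < 2*k-1) :
    fJ k a a + (if a + k < 2*k-1 then fJ k (a+k) a else 0) =
      if a < k then 2 else -2 := by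
  unfold fJ
  split_ifs <;> omega

/-- The matrix obtained from `J` by deleting its `2k`-th (i.e. last) row and column
has determinant `(-1)^(k-1) · 2^(2k-1)`. -/
theorem block_matrix_det_minor (k : ℕ) (hk : 1 ≤ k) :
    ((Jmat k).submatrix
        (Fin.castLE (by omega) : Fin (2 * k - 1) → Fin (k + k))
        (Fin.castLE (by omega) : Fin (2 * k - 1) → Fin (k + k))).det =
      (-1) ^ (k - 1) * 2 ^ (2 * k - 1) := by
  set J' := ((Jmat k).submatrix
        (Fin.castLE (by omega) : Fin (2 * k - 1) → Fin (k + k))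
        (Fin.castLE (by omega) : Fin (2 * k - 1) → Fin (k + k))) with hJ'
  have hJ'app : ∀ i j : Fin (2*k-1), J' i j = fJ k i.val j.val := by
    intro i j
    simp [hJ', Jmat_apply']
  -- product entry formula
  have hmul : ∀ i j : Fin (2*k-1), (Lmat k * J') i j =
      fJ k i.val j.val + (if a : i.val + k < 2*k-1 then fJ k (i.val+k) j.val else 0) := by
    intro i j
    rw [Matrix.mul_apply]
    simp only [Lmat, Matrix.of_apply, add_mul, ite_mul, one_mul, zero_mul]
    rw [Finset.sum_add_distrib]
    congr 1
    · rw [Finset.sum_ite_eq]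
      simp [hJ'app]
    · split_ifs with h
      · rw [Finset.sum_eq_single (⟨i.val + k, h⟩ : Fin (2*k-1))]
        · simp [hJ'app]
        · intro m _ hm
          have : ¬ (m.val = i.val + k) := fun hc => hm (Fin.ext hc)
          simp [this]
        · simp
      · apply Finset.sum_eq_zero
        intro m _
        have : ¬ (m.val = i.val + k) := by omega
        simp [this]
  have hLT : (Lmat k * J').BlockTriangular OrderDual.toDual := by
    intro i j hij
    have hij' : i.val < j.val := hij
    rw [hmul]
    exact key_offdiag k i.val j.val hk i.isLt j.isLt hij'
  have hdet2 : (Lmat k * J').det = ∏ i : Fin (2*k-1), (if i.val < k then (2:ℤ) else -2) := by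
    rw [Matrix.det_of_lowerTriangular _ hLT]
    apply Finset.prod_congr rfl
    intro i _
    rw [hmul]
    exact key_diag k i.val hk i.isLt
  have hprod : ∏ i : Fin (2*k-1), (if i.val < k then (2:ℤ) else -2) =
      2^k * (-2)^(k-1) := by
    rw [Fin.prod_univ_eq_prod_range (fun a => if a < k then (2:ℤ) else -2)]
    have h21 : 2*k-1 = k + (k-1) := by omega
    rw [h21, Finset.prod_range_add]
    congr 1
    · rw [Finset.prod_congr rfl (fun x hx => by simp at hx; simp [hx] : ∀ x ∈ Finset.range k, (if x < k then (2:ℤ) else -2) = 2)]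
      simp
    · rw [Finset.prod_congr rfl (fun x _ => if_neg (by omega) : ∀ x ∈ Finset.range (k-1), (if k + x < k then (2:ℤ) else -2) = -2)]
      simp
  have : J'.det = (Lmat k * J').det := by
    rw [Matrix.det_mul, Lmat_det k hk, one_mul]
  rw [this, hdet2, hprod]
  have h1 : ((-2:ℤ))^(k-1) = (-1)^(k-1) * 2^(k-1) := by
    rw [neg_pow]
  rw [h1]
  have h2 : (2:ℤ)^(2*k-1) = 2^k * 2^(k-1) := by
    rw [← pow_add]; congr 1; omega
  rw [h2]; ring
end

section
/- Let K be a commutative ring, q ∈ K a unit, n ≥ 1, and let V be a free K-module with basis v_1,…,v_{2n}. Set i' = 2n+1−i, and define ρ_i = n−i for 1 ≤ i ≤ n and ρ_{i'} = −ρ_i. Define the K-linear map E : V ⊗ V → V ⊗ V by E(v_k ⊗ v_l) = δ_{k,l'} · Σ_{i=1}^{2n} q^{ρ_{i'} − ρ_k} v_i ⊗ v_{i'}. Then E ∘ E = ω₀ · E, where ω₀ = Σ_{i=1}^{2n} q^{2ρ_{i'}}. -/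
/-- Let `K` be a commutative ring, `q ∈ K` a unit, and `V` free on `v_1, …, v_{2n}`.
With `i' = 2n+1-i`, `ρ_i = n - i` for `1 ≤ i ≤ n` and `ρ_{i'} = -ρ_i`, the linear
endomorphism `E` of `V ⊗ V` defined by
`E(v_k ⊗ v_l) = δ_{k,l'} · Σ_i q^{ρ_{i'} - ρ_k} v_i ⊗ v_{i'}`
satisfies `E ∘ E = ω₀ · E`, where `ω₀ = Σ_i q^{2ρ_{i'}}`.
(Here `V ⊗ V` is modelled as the free module on the product basis, indexed by
pairs, with all indices `0`-based: `i' = 2n-1-i`.) -/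
theorem contraction_squared (n : ℕ) (hn : 1 ≤ n) (K : Type*) [CommRing K] (q : Kˣ) :
    let dual : Fin (2 * n) → Fin (2 * n) := fun i => ⟨2 * n - 1 - i.val, by omega⟩
    let ρ : Fin (2 * n) → ℤ := fun i =>
      if (i : ℕ) < n then (n : ℤ) - (i : ℕ) - 1 else (n : ℤ) - (i : ℕ)
    let M : Matrix (Fin (2 * n) × Fin (2 * n)) (Fin (2 * n) × Fin (2 * n)) K :=
      Matrix.of fun p c =>
        if c.1 = dual c.2 ∧ p.2 = dual p.1 then ((q ^ (ρ (dual p.1) - ρ c.1) : Kˣ) : K) else 0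
    let ω₀ : K := ∑ i : Fin (2 * n), ((q ^ (2 * ρ (dual i)) : Kˣ) : K)
    M.mulVecLin.comp M.mulVecLin = ω₀ • M.mulVecLin := by
  intro dual ρ M ω₀
  have hdd : ∀ a, dual (dual a) = a := by
    intro a
    apply Fin.ext
    simp only [dual]
    omega
  have hρd : ∀ a, ρ (dual a) = -ρ a := by
    intro a
    have ha := a.isLt
    simp only [ρ, dual]
    split_ifs <;> push_cast <;> omega
  have hMM : M * M = ω₀ • M := by
    ext p c
    show (∑ j, M p j * M j c) = ω₀ * M p c
    rw [Fintype.sum_prod_type]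
    have h1 : ∀ a : Fin (2 * n),
        (∑ b, M p (a, b) * M (a, b) c) = M p (a, dual a) * M (a, dual a) c := by
      intro a
      apply Finset.sum_eq_single (dual a)
      · intro b _ hb
        have : M (a, b) c = 0 := by
          simp only [M, Matrix.of_apply]
          rw [if_neg]
          rintro ⟨-, h2⟩
          exact hb h2
        rw [this, mul_zero]
      · intro h; exact absurd (Finset.mem_univ _) h
    simp only [h1]
    have h2 : ∀ a : Fin (2 * n),
        M p (a, dual a) * M (a, dual a) c
          = ((q ^ (2 * ρ (dual a)) : Kˣ) : K) * M p c := by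
      intro a
      simp only [M, Matrix.of_apply, hdd, hρd, and_true, true_and]
      by_cases hp : p.2 = dual p.1
      · by_cases hc : c.1 = dual c.2
        · simp only [if_pos hp, if_pos hc, if_pos (And.intro hc hp)]
          rw [← Units.val_mul, ← Units.val_mul, ← zpow_add, ← zpow_add]
          congr 1
          ring_nf
        · simp [hc]
      · simp [hp]
    simp only [h2]
    rw [← Finset.sum_mul]
  calc M.mulVecLin.comp M.mulVecLin = (M * M).mulVecLin := by
        rw [Matrix.mulVecLin_mul]
    _ = ω₀ • M.mulVecLin := by
        rw [hMM]
        apply LinearMap.ext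
        intro v
        simp [Matrix.mulVecLin, Matrix.smul_mulVec]
end

section
/- Let F be a field, q ∈ F with q ≠ 0, and z = q − q^{-1}. Let A be an associative F-algebra containing elements A_t for j ≤ t ≤ n and B_{s,t} for j ≤ s < t ≤ n (where 1 ≤ j < n are fixed integers), satisfying: (i) B_{s,u}B_{u,t} − q^{-1}B_{u,t}B_{s,u} = −q^{-1}B_{s,t} whenever j ≤ s < u < t ≤ n; (ii) A_{t+1}B_{t,t+1} − q^{-1}B_{t,t+1}A_{t+1} = −q^{-1}A_t for j ≤ t < n; (iii) A_k B_{j,k−1} = B_{j,k−1}A_k for j+1 < k ≤ n. Then for all k with j < k ≤ n: A_k B_{j,k} − q^{-1} B_{j,k} A_k = (−q)^{j−k} A_j − z · Σ_{t=j+1}^{k−1} (−q)^{t−k} B_{j,t} A_t. -/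
/-- Abstract form of the `q`-commutator formula for quantum-group root vectors
(`X t` plays the role of `x⁻_{ε_i+ε_t}` and `B s t` of `x⁻_{ε_s-ε_t}`):
given the relations (i)-(iii), for all `j < m ≤ n`,
`X m · B j m - q⁻¹ (B j m · X m)
  = (-q)^{j-m} X j - (q - q⁻¹) Σ_{t=j+1}^{m-1} (-q)^{t-m} B j t · X t`. -/
theorem qcommutator_formula {F : Type*} [Field F] (q : F) (hq : q ≠ 0)
    {A : Type*} [Ring A] [Algebra F A]
    (n j : ℕ) (hj : 1 ≤ j) (hjn : j < n)
    (X : ℕ → A) (B : ℕ → ℕ → A)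
    (h1 : ∀ s u t, j ≤ s → s < u → u < t → t ≤ n →
      B s u * B u t - q⁻¹ • (B u t * B s u) = (-q⁻¹) • B s t)
    (h2 : ∀ t, j ≤ t → t < n →
      X (t + 1) * B t (t + 1) - q⁻¹ • (B t (t + 1) * X (t + 1)) = (-q⁻¹) • X t)
    (h3 : ∀ m, j + 1 < m → m ≤ n → X m * B j (m - 1) = B j (m - 1) * X m) :
    ∀ m, j < m → m ≤ n →
      X m * B j m - q⁻¹ • (B j m * X m) =
        ((-q) ^ ((j : ℤ) - (m : ℤ))) • X j -
          (q - q⁻¹) • ∑ t ∈ Finset.Ioo j m, ((-q) ^ ((t : ℤ) - (m : ℤ))) • (B j t * X t) := by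
  have hq' : (-q) ≠ 0 := neg_ne_zero.mpr hq
  intro m hm
  induction m, hm using Nat.le_induction with
  | base =>
    intro hmn
    have hIoo : Finset.Ioo j (j + 1) = ∅ := by ext t; simp
    rw [hIoo]
    simp only [Finset.sum_empty, smul_zero, sub_zero]
    have he : ((j : ℤ) - ((j + 1 : ℕ) : ℤ)) = -1 := by push_cast; ring
    rw [he, zpow_neg_one, h2 j le_rfl hjn, inv_neg]
  | succ m hm ih =>
    intro hmn
    have hmn' : m ≤ n := by omega
    have hjm : j < m := hm
    have hYD : X (m + 1) * B j m = B j m * X (m + 1) := by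
      have h := h3 (m + 1) (by omega) hmn
      simpa using h
    have hYC : X (m + 1) * B m (m + 1) =
        (-q⁻¹) • X m + q⁻¹ • (B m (m + 1) * X (m + 1)) :=
      sub_eq_iff_eq_add.mp (h2 m (by omega) (by omega))
    have hB := h1 j m (m + 1) le_rfl hjm (by omega) hmn
    have hBexp : B j (m + 1) =
        (-q) • (B j m * B m (m + 1)) + B m (m + 1) * B j m := by
      have h1' : (-q) • ((-q⁻¹) • B j (m + 1)) = B j (m + 1) := by
        rw [smul_smul, neg_mul_neg, mul_inv_cancel₀ hq, one_smul]
      calc B j (m + 1) = (-q) • ((-q⁻¹) • B j (m + 1)) := h1'.symm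
        _ = (-q) • (B j m * B m (m + 1) - q⁻¹ • (B m (m + 1) * B j m)) := by rw [hB]
        _ = (-q) • (B j m * B m (m + 1)) + B m (m + 1) * B j m := by
            rw [smul_sub, smul_smul]
            have : -q * q⁻¹ = -1 := by
              rw [neg_mul, mul_inv_cancel₀ hq]
            rw [this, neg_one_smul, sub_neg_eq_add]
    have key : X (m + 1) * B j (m + 1) - q⁻¹ • (B j (m + 1) * X (m + 1)) =
        B j m * X m - q⁻¹ • (X m * B j m) := by
      have hYDa : ∀ a : A, X (m + 1) * (B j m * a) = B j m * (X (m + 1) * a) :=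
        fun a => by rw [← mul_assoc, hYD, mul_assoc]
      have hYCa : ∀ a : A, X (m + 1) * (B m (m + 1) * a) =
          (-q⁻¹) • (X m * a) + q⁻¹ • (B m (m + 1) * (X (m + 1) * a)) :=
        fun a => by
          rw [← mul_assoc, hYC, add_mul, smul_mul_assoc, smul_mul_assoc, mul_assoc]
      rw [hBexp]
      simp only [mul_add, add_mul, smul_mul_assoc, mul_smul_comm, mul_assoc]
      simp only [hYDa, hYCa, hYC, hYD, mul_add, add_mul, smul_add, smul_sub, smul_smul,
        mul_smul_comm, smul_mul_assoc, mul_assoc]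
      match_scalars <;> field_simp <;> ring
    rw [key]
    have hIns : Finset.Ioo j (m + 1) = insert m (Finset.Ioo j m) := by
      ext t; simp; omega
    have hnot : m ∉ Finset.Ioo j m := by simp
    rw [hIns, Finset.sum_insert hnot]
    have hpow : ∀ t : ℕ, ((-q) ^ ((t : ℤ) - ((m + 1 : ℕ) : ℤ))) =
        (-q)⁻¹ * (-q) ^ ((t : ℤ) - (m : ℤ)) := fun t => by
      rw [← zpow_neg_one, ← zpow_add₀ hq']
      congr 1
      push_cast; ring
    simp only [hpow]
    have hm0 : ((m : ℤ) - (m : ℤ)) = 0 := sub_self _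
    rw [hm0, zpow_zero, mul_one]
    simp only [mul_smul, ← Finset.smul_sum]
    have hxD : X m * B j m =
        (((-q) ^ ((j : ℤ) - (m : ℤ))) • X j -
          (q - q⁻¹) • ∑ t ∈ Finset.Ioo j m, ((-q) ^ ((t : ℤ) - (m : ℤ))) • (B j t * X t)) +
        q⁻¹ • (B j m * X m) := sub_eq_iff_eq_add.mp (ih hmn')
    rw [hxD]
    have hinv : (-q)⁻¹ = -q⁻¹ := inv_neg
    rw [hinv]
    match_scalars <;> field_simp <;> ring
end
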